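/- Fix constants ρ̄ > 0, p̄_ρ > 0, k̄ > 0, ν̄ > 0, λ̄ ∈ ℝ with 2ν̄ + λ̄ > 0, and ū₁, ū₂ ∈ ℝ. For ξ ∈ ℝ² with ξ ≠ 0, set ω = ξ/|ξ|, β(ξ) = p̄_ρ + k̄ρ̄|ξ|², and let A_S(ξ) and B̄_S(ξ) be as for the two-dimensional Navier–Stokes–Korteweg system: A_S(ξ) = [[ω₁ū₁+ω₂ū₂, ω₁√β(ξ), ω₂√β(ξ)], [ω₁√β(ξ), ω₁ū₁+ω₂ū₂, 0], [ω₂√β(ξ), 0, ω₁ū₁+ω₂ū₂]], B̄_S(ξ) = (1/ρ̄)[[0,0,0], [0, (2ν̄+λ̄)ω₁²+ν̄ω₂², (λ̄+ν̄)ω₁ω₂], [0, (λ̄+ν̄)ω₁ω₂, ν̄ω₁²+(2ν̄+λ̄)ω₂²]]. Define K̄_S(ξ) := ((2ν̄+λ̄)/(4 ρ̄ √β(ξ))) [[0, ω₁, ω₂], [−ω₁, 0, 0], [−ω₂, 0, 0]]. Then K̄_S(ξ) is skew-symmetric for every ξ ≠ 0, and there exists a constant θ̄ > 0 (independent of ξ)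 such that [K̄_S(ξ) A_S(ξ)]^s + B̄_S(ξ) ≥ θ̄ I₃ for all ξ ≠ 0. -/

import Mathlib

open Matrix

/-- The symmetric part `[M]ˢ = (1/2)(M + Mᵀ)` of a real square matrix. -/
noncomputable def symPart {n : ℕ} (M : Matrix (Fin n) (Fin n) ℝ) :
    Matrix (Fin n) (Fin n) ℝ :=
  (1 / 2 : ℝ) • (M + Mᵀ)

set_option maxHeartbeats 2000000 in
/-- For the symmetrized symbols `A_S(ξ)`, `B̄_S(ξ)` of the linearized
two-dimensional Navier–Stokes–Korteweg system, the matrix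
`K̄_S(ξ) = ((2ν̄+λ̄)/(4ρ̄√β(ξ))) [[0,ω₁,ω₂],[-ω₁,0,0],[-ω₂,0,0]]` is skew-symmetric for
every `ξ ≠ 0` and there is a uniform constant `θ̄ > 0` with
`[K̄_S(ξ)A_S(ξ)]ˢ + B̄_S(ξ) ≥ θ̄ I₃` for all `ξ ≠ 0`. -/
theorem NSK_compensating_symbol (ρ pρ k ν lam u₁ u₂ : ℝ)
    (hρ : 0 < ρ) (hp : 0 < pρ) (hk : 0 < k) (hν : 0 < ν) (hlam : 0 < 2 * ν + lam) :
    let ω₁ : (Fin 2 → ℝ) → ℝ := fun ξ => ξ 0 / Real.sqrt (ξ 0 ^ 2 + ξ 1 ^ 2)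
    let ω₂ : (Fin 2 → ℝ) → ℝ := fun ξ => ξ 1 / Real.sqrt (ξ 0 ^ 2 + ξ 1 ^ 2)
    let β : (Fin 2 → ℝ) → ℝ := fun ξ => pρ + k * ρ * (ξ 0 ^ 2 + ξ 1 ^ 2)
    let AS : (Fin 2 → ℝ) → Matrix (Fin 3) (Fin 3) ℝ := fun ξ =>
      !![ω₁ ξ * u₁ + ω₂ ξ * u₂, ω₁ ξ * Real.sqrt (β ξ), ω₂ ξ * Real.sqrt (β ξ);
         ω₁ ξ * Real.sqrt (β ξ), ω₁ ξ * u₁ + ω₂ ξ * u₂, 0;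
         ω₂ ξ * Real.sqrt (β ξ), 0, ω₁ ξ * u₁ + ω₂ ξ * u₂]
    let BS : (Fin 2 → ℝ) → Matrix (Fin 3) (Fin 3) ℝ := fun ξ =>
      (1 / ρ) • !![0, 0, 0;
         0, (2 * ν + lam) * ω₁ ξ ^ 2 + ν * ω₂ ξ ^ 2, (lam + ν) * ω₁ ξ * ω₂ ξ;
         0, (lam + ν) * ω₁ ξ * ω₂ ξ, ν * ω₁ ξ ^ 2 + (2 * ν + lam) * ω₂ ξ ^ 2]
    let KS : (Fin 2 → ℝ) → Matrix (Fin 3) (Fin 3) ℝ := fun ξ =>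
      ((2 * ν + lam) / (4 * ρ * Real.sqrt (β ξ))) •
        !![0, ω₁ ξ, ω₂ ξ; -ω₁ ξ, 0, 0; -ω₂ ξ, 0, 0]
    (∀ ξ : Fin 2 → ℝ, ξ ≠ 0 → (KS ξ)ᵀ = -(KS ξ)) ∧
    (∃ θ : ℝ, 0 < θ ∧ ∀ ξ : Fin 2 → ℝ, ξ ≠ 0 →
      (symPart (KS ξ * AS ξ) + BS ξ - θ • (1 : Matrix (Fin 3) (Fin 3) ℝ)).PosSemidef) := by
  intro ω₁ ω₂ β AS BS KS
  have ha : 0 < (2 * ν + lam) / (4 * ρ) := by positivity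
  constructor
  · intro ξ hξ
    ext i j
    fin_cases i <;> fin_cases j <;>
      simp [KS, Matrix.transpose_apply, Matrix.smul_apply, Matrix.neg_apply,
        Matrix.vecHead, Matrix.vecTail]
  · refine ⟨min (ν / ρ) ((2 * ν + lam) / (4 * ρ)), lt_min (by positivity) ha, ?_⟩
    intro ξ hξ
    set θ : ℝ := min (ν / ρ) ((2 * ν + lam) / (4 * ρ)) with hθdef
    have hθ1 : θ ≤ ν / ρ := min_le_left _ _
    have hθ2 : θ ≤ (2 * ν + lam) / (4 * ρ) := min_le_right _ _
    have hξ2 : 0 < ξ 0 ^ 2 + ξ 1 ^ 2 := by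
      rcases (show ξ 0 ≠ 0 ∨ ξ 1 ≠ 0 by
        by_contra h
        push_neg at h
        exact hξ (funext fun i => by fin_cases i <;> simp [h.1, h.2])) with h | h
      · positivity
      · positivity
    have hr : 0 < Real.sqrt (ξ 0 ^ 2 + ξ 1 ^ 2) := Real.sqrt_pos.2 hξ2
    have hβ : 0 < β ξ := by have := hξ2; simp only [β]; positivity
    have hsb : 0 < Real.sqrt (β ξ) := Real.sqrt_pos.2 hβ
    have hw : ω₁ ξ ^ 2 + ω₂ ξ ^ 2 = 1 := by
      have hr2 : Real.sqrt (ξ 0 ^ 2 + ξ 1 ^ 2) ^ 2 = ξ 0 ^ 2 + ξ 1 ^ 2 :=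
        Real.sq_sqrt hξ2.le
      simp only [ω₁, ω₂, div_pow]
      rw [hr2]
      field_simp
    set sb := Real.sqrt (β ξ) with hsbdef
    set w1 := ω₁ ξ with hw1def
    set w2 := ω₂ ξ with hw2def
    set c := (2 * ν + lam) / (4 * ρ * sb) with hcdef
    have hcs : c * sb = (2 * ν + lam) / (4 * ρ) := by
      rw [hcdef]; field_simp
    set E : Matrix (Fin 3) (Fin 3) ℝ :=
      !![c * sb * (w1 ^ 2 + w2 ^ 2) - θ, 0, 0;
         0, (1 / ρ) * ((2 * ν + lam) * w1 ^ 2 + ν * w2 ^ 2) - c * sb * w1 ^ 2 - θ,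
            (1 / ρ) * ((lam + ν) * w1 * w2) - c * sb * (w1 * w2);
         0, (1 / ρ) * ((lam + ν) * w1 * w2) - c * sb * (w1 * w2),
            (1 / ρ) * (ν * w1 ^ 2 + (2 * ν + lam) * w2 ^ 2) - c * sb * w2 ^ 2 - θ] with hEdef
    have hE : symPart (KS ξ * AS ξ) + BS ξ - θ • (1 : Matrix (Fin 3) (Fin 3) ℝ) = E := by
      ext i j
      fin_cases i <;> fin_cases j <;>
        simp [symPart, Matrix.mul_apply, Fin.sum_univ_three, KS, AS, BS, hEdef,
          Matrix.smul_apply, Matrix.add_apply, Matrix.sub_apply, Matrix.one_apply,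
          Matrix.transpose_apply, Matrix.vecHead, Matrix.vecTail, ← hw1def, ← hw2def,
          ← hsbdef, ← hcdef] <;> ring
    rw [hE]
    rw [Matrix.posSemidef_iff_dotProduct_mulVec]
    constructor
    · ext i j
      fin_cases i <;> fin_cases j <;>
        simp [hEdef, Matrix.conjTranspose_apply, Matrix.vecHead, Matrix.vecTail]
    · intro x
      have key : star x ⬝ᵥ E *ᵥ x =
          ((2 * ν + lam) / (4 * ρ) - θ) * x 0 ^ 2 +
          (3 * ((2 * ν + lam) / (4 * ρ)) - θ) * (w1 * x 1 + w2 * x 2) ^ 2 +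
          (ν / ρ - θ) * (w2 * x 1 - w1 * x 2) ^ 2 := by
        simp only [hEdef, Matrix.mulVec, dotProduct, Fin.sum_univ_three,
          star_trivial, Matrix.cons_val', Matrix.cons_val_zero, Matrix.cons_val_one,
          Matrix.head_cons, Matrix.empty_val', Matrix.cons_val_fin_one, Matrix.head_fin_const,
          Matrix.cons_val_two, Matrix.tail_cons, Matrix.of_apply]
        linear_combination ((w1 ^ 2 + w2 ^ 2) * x 0 ^ 2 - (w1 * x 1 + w2 * x 2) ^ 2) * hcs +
          ((2 * ν + lam) / (4 * ρ) * x 0 ^ 2 + θ * (x 1 ^ 2 + x 2 ^ 2)) * hw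
      rw [key]
      have h1 : 0 ≤ (2 * ν + lam) / (4 * ρ) - θ := by linarith
      have h2 : 0 ≤ 3 * ((2 * ν + lam) / (4 * ρ)) - θ := by linarith
      have h3 : 0 ≤ ν / ρ - θ := by linarith
      positivity
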